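/- With the matrix A of the even-dimensional type [j,0,0] Lotka-Volterra system (blocks J_i, K^i_k = ((b_ic_k−b_kc_i)/a_{j+1})·1, and L as above) and the Poisson bracket {x_i,x_k}=A_{ik}x_ix_k, the integrals F_i = (x_{2i−1}+x_{2i})^{a_{j+1}} x_{n−1}^{−c_i} x_n^{b_i} pairwise Poisson commute: {F_i, F_k} = 0 for all 1 ≤ i, k ≤ j. -/

import Mathlib

open Real Finset

/-- i-th component of the gradient of `F` at `x`. -/
noncomputable def grad {n : ℕ} (F : (Fin n → ℝ) → ℝ) (x : Fin n → ℝ) (i : Fin n) : ℝ :=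
  fderiv ℝ F x (Pi.single i 1)

/-- Lie derivative (directional derivative) of `F` along the vector field `f` at `x`. -/
noncomputable def lieDeriv {n : ℕ} (F : (Fin n → ℝ) → ℝ) (f : (Fin n → ℝ) → Fin n → ℝ)
    (x : Fin n → ℝ) : ℝ := ∑ i, grad F x i * f x i

/-- The Poisson bracket {F,G}(x) = Σ_{i,j} A_{ij} x_i x_j ∂_iF ∂_jG. -/
noncomputable def pbracket {n : ℕ} (A : Matrix (Fin n) (Fin n) ℝ)
    (F G : (Fin n → ℝ) → ℝ) (x : Fin n → ℝ) : ℝ :=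
  ∑ i, ∑ j, A i j * x i * x j * grad F x i * grad G x j

/-- The (possibly inhomogeneous) Lotka-Volterra vector field
`f_i(x) = x_i (r_i + Σ_j A_{ij} x_j)`. -/
def lvField {n : ℕ} (A : Matrix (Fin n) (Fin n) ℝ) (r : Fin n → ℝ)
    (x : Fin n → ℝ) (i : Fin n) : ℝ := x i * (r i + ∑ j, A i j * x j)

/-- The antisymmetric matrix of the even-dimensional type [j,0,0] LV system:
diagonal 2×2 blocks J_p = [[0,a_p],[-a_p,0]] (p = 1,…,j), off-diagonal 2×2 blocks
K^p_q = ((b_p c_q − b_q c_p)/a_{j+1})·𝟙 for p < q, last block column L with rows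
(b_p, c_p) repeated twice, and final diagonal block J_{j+1} (parameters 1-based). -/
noncomputable def typeJ00Mat (j : ℕ) (a b c : ℕ → ℝ) :
    Matrix (Fin (2 * (j + 1))) (Fin (2 * (j + 1))) ℝ :=
  Matrix.of fun r s =>
    let R := r.val; let S := s.val
    if R = S then 0
    else if R < 2 * j ∧ S < 2 * j then
      (if R / 2 = S / 2 then (if R < S then a (R / 2 + 1) else -a (R / 2 + 1))
       else (b (R / 2 + 1) * c (S / 2 + 1) - b (S / 2 + 1) * c (R / 2 + 1)) / a (j + 1))
    else if R < 2 * j then (if S = 2 * j then b (R / 2 + 1) else c (R / 2 + 1))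
    else if S < 2 * j then -(if R = 2 * j then b (S / 2 + 1) else c (S / 2 + 1))
    else (if R < S then a (j + 1) else -a (j + 1))

/-- The integral F_i = (x_{2i−1}+x_{2i})^{a_{j+1}} x_{n−1}^{−c_i} x_n^{b_i}
of the type [j,0,0] system, for i = 1,…,j (here i : Fin j is 0-based). -/
noncomputable def typeJ00F (j : ℕ) (a b c : ℕ → ℝ) (i : Fin j)
    (y : Fin (2 * (j + 1)) → ℝ) : ℝ :=
  (y ⟨2 * i.val, by have := i.isLt; omega⟩ + y ⟨2 * i.val + 1, by have := i.isLt; omega⟩)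
      ^ a (j + 1)
    * (y ⟨2 * j, by omega⟩) ^ (-(c (i.val + 1)))
    * (y ⟨2 * j + 1, by omega⟩) ^ (b (i.val + 1))

section Aux

set_option linter.unusedTactic false
set_option linter.unreachableTactic false

lemma grad_typeJ00F (j : ℕ) (a b c : ℕ → ℝ) (i : Fin j) (x : Fin (2 * (j + 1)) → ℝ)
    (hx : ∀ m, 0 < x m) (m : Fin (2 * (j + 1))) :
    grad (typeJ00F j a b c i) x m =
      ((if (⟨2 * i.val, by have := i.isLt; omega⟩ : Fin (2 * (j + 1))) = m then (1:ℝ) else 0)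
        + (if (⟨2 * i.val + 1, by have := i.isLt; omega⟩ : Fin (2 * (j + 1))) = m then (1:ℝ) else 0)) *
        (a (j+1) * (x ⟨2 * i.val, by have := i.isLt; omega⟩ + x ⟨2 * i.val + 1, by have := i.isLt; omega⟩) ^ (a (j+1) - 1)
          * (x ⟨2*j, by omega⟩) ^ (-(c (i.val+1))) * (x ⟨2*j+1, by omega⟩) ^ (b (i.val+1)))
      + (if (⟨2*j, by omega⟩ : Fin (2 * (j + 1))) = m then (1:ℝ) else 0) *
        ((-(c (i.val+1))) * (x ⟨2 * i.val, by have := i.isLt; omega⟩ + x ⟨2 * i.val + 1, by have := i.isLt; omega⟩) ^ (a (j+1))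
          * (x ⟨2*j, by omega⟩) ^ (-(c (i.val+1)) - 1) * (x ⟨2*j+1, by omega⟩) ^ (b (i.val+1)))
      + (if (⟨2*j+1, by omega⟩ : Fin (2 * (j + 1))) = m then (1:ℝ) else 0) *
        ((b (i.val+1)) * (x ⟨2 * i.val, by have := i.isLt; omega⟩ + x ⟨2 * i.val + 1, by have := i.isLt; omega⟩) ^ (a (j+1))
          * (x ⟨2*j, by omega⟩) ^ (-(c (i.val+1))) * (x ⟨2*j+1, by omega⟩) ^ (b (i.val+1) - 1)) := by
  set m1 : Fin (2*(j+1)) := ⟨2 * i.val, by have := i.isLt; omega⟩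
  set m2 : Fin (2*(j+1)) := ⟨2 * i.val + 1, by have := i.isLt; omega⟩
  set m3 : Fin (2*(j+1)) := ⟨2*j, by omega⟩
  set m4 : Fin (2*(j+1)) := ⟨2*j+1, by omega⟩
  have h1 : HasFDerivAt (fun y : Fin (2*(j+1)) → ℝ => (y m1 + y m2) ^ a (j+1))
      ((a (j+1) * (x m1 + x m2) ^ (a (j+1) - 1)) •
        (ContinuousLinearMap.proj m1 + ContinuousLinearMap.proj m2)) x :=
    (((ContinuousLinearMap.proj m1 : (Fin (2*(j+1)) → ℝ) →L[ℝ] ℝ).hasFDerivAt).add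
      ((ContinuousLinearMap.proj m2).hasFDerivAt)).rpow_const
      (Or.inl (ne_of_gt (add_pos (hx m1) (hx m2))))
  have h3 : HasFDerivAt (fun y : Fin (2*(j+1)) → ℝ => (y m3) ^ (-(c (i.val+1))))
      (((-(c (i.val+1))) * (x m3) ^ (-(c (i.val+1)) - 1)) • (ContinuousLinearMap.proj m3)) x :=
    ((ContinuousLinearMap.proj m3 : (Fin (2*(j+1)) → ℝ) →L[ℝ] ℝ).hasFDerivAt).rpow_const
      (Or.inl (ne_of_gt (hx m3)))
  have h4 : HasFDerivAt (fun y : Fin (2*(j+1)) → ℝ => (y m4) ^ (b (i.val+1)))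
      (((b (i.val+1)) * (x m4) ^ ((b (i.val+1)) - 1)) • (ContinuousLinearMap.proj m4)) x :=
    ((ContinuousLinearMap.proj m4 : (Fin (2*(j+1)) → ℝ) →L[ℝ] ℝ).hasFDerivAt).rpow_const
      (Or.inl (ne_of_gt (hx m4)))
  have H : HasFDerivAt (fun y : Fin (2*(j+1)) → ℝ =>
      ((y m1 + y m2) ^ a (j+1) * (y m3) ^ (-(c (i.val+1)))) * (y m4) ^ (b (i.val+1))) _ x :=
    (h1.mul h3).mul h4
  have hF : typeJ00F j a b c i = fun y : Fin (2*(j+1)) → ℝ =>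
      ((y m1 + y m2) ^ a (j+1) * (y m3) ^ (-(c (i.val+1)))) * (y m4) ^ (b (i.val+1)) := rfl
  rw [grad, hF, H.fderiv]
  simp only [ContinuousLinearMap.add_apply, ContinuousLinearMap.smul_apply,
    ContinuousLinearMap.proj_apply, Pi.single_apply, smul_eq_mul, Pi.mul_apply]
  ring

lemma grad_zero (j : ℕ) (a b c : ℕ → ℝ) (i : Fin j) (x : Fin (2 * (j + 1)) → ℝ)
    (hx : ∀ m, 0 < x m) (m : Fin (2 * (j + 1)))
    (h1 : m ≠ ⟨2 * i.val, by have := i.isLt; omega⟩)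
    (h2 : m ≠ ⟨2 * i.val + 1, by have := i.isLt; omega⟩)
    (h3 : m ≠ ⟨2*j, by omega⟩) (h4 : m ≠ ⟨2*j+1, by omega⟩) :
    grad (typeJ00F j a b c i) x m = 0 := by
  rw [grad_typeJ00F j a b c i x hx m, if_neg (Ne.symm h1), if_neg (Ne.symm h2),
    if_neg (Ne.symm h3), if_neg (Ne.symm h4)]
  ring

lemma grad_front (j : ℕ) (a b c : ℕ → ℝ) (i : Fin j) (x : Fin (2 * (j + 1)) → ℝ)
    (hx : ∀ m, 0 < x m) (m : Fin (2 * (j + 1)))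
    (hm : m.val = 2 * i.val ∨ m.val = 2 * i.val + 1) :
    grad (typeJ00F j a b c i) x m =
      a (j+1) * (x ⟨2 * i.val, by have := i.isLt; omega⟩
          + x ⟨2 * i.val + 1, by have := i.isLt; omega⟩) ^ (a (j+1) - 1)
        * (x ⟨2*j, by omega⟩) ^ (-(c (i.val+1))) * (x ⟨2*j+1, by omega⟩) ^ (b (i.val+1)) := by
  have hij := i.isLt
  rw [grad_typeJ00F j a b c i x hx m]
  rcases hm with h | h
  · rw [if_pos (Fin.ext (show 2*i.val = m.val by omega)), if_neg (fun he => by simp only [Fin.ext_iff] at he; omega),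
      if_neg (fun he => by simp only [Fin.ext_iff] at he; omega),
      if_neg (fun he => by simp only [Fin.ext_iff] at he; omega)]
    ring
  · rw [if_neg (fun he => by simp only [Fin.ext_iff] at he; omega), if_pos (Fin.ext (show 2*i.val+1 = m.val by omega)),
      if_neg (fun he => by simp only [Fin.ext_iff] at he; omega),
      if_neg (fun he => by simp only [Fin.ext_iff] at he; omega)]
    ring

lemma grad_u (j : ℕ) (a b c : ℕ → ℝ) (i : Fin j) (x : Fin (2 * (j + 1)) → ℝ)
    (hx : ∀ m, 0 < x m) :
    grad (typeJ00F j a b c i) x ⟨2*j, by omega⟩ =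
      (-(c (i.val+1))) * (x ⟨2 * i.val, by have := i.isLt; omega⟩
          + x ⟨2 * i.val + 1, by have := i.isLt; omega⟩) ^ (a (j+1))
        * (x ⟨2*j, by omega⟩) ^ (-(c (i.val+1)) - 1) * (x ⟨2*j+1, by omega⟩) ^ (b (i.val+1)) := by
  have hij := i.isLt
  rw [grad_typeJ00F j a b c i x hx]
  rw [if_neg (fun he => by simp only [Fin.ext_iff] at he; omega),
    if_neg (fun he => by simp only [Fin.ext_iff] at he; omega), if_pos rfl,
    if_neg (fun he => by simp only [Fin.ext_iff] at he; omega)]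
  ring

lemma grad_v (j : ℕ) (a b c : ℕ → ℝ) (i : Fin j) (x : Fin (2 * (j + 1)) → ℝ)
    (hx : ∀ m, 0 < x m) :
    grad (typeJ00F j a b c i) x ⟨2*j+1, by omega⟩ =
      (b (i.val+1)) * (x ⟨2 * i.val, by have := i.isLt; omega⟩
          + x ⟨2 * i.val + 1, by have := i.isLt; omega⟩) ^ (a (j+1))
        * (x ⟨2*j, by omega⟩) ^ (-(c (i.val+1))) * (x ⟨2*j+1, by omega⟩) ^ (b (i.val+1) - 1) := by
  have hij := i.isLt
  rw [grad_typeJ00F j a b c i x hx]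
  rw [if_neg (fun he => by simp only [Fin.ext_iff] at he; omega),
    if_neg (fun he => by simp only [Fin.ext_iff] at he; omega),
    if_neg (fun he => by simp only [Fin.ext_iff] at he; omega), if_pos rfl]
  ring

variable (j : ℕ) (a b c : ℕ → ℝ) (p q r s : ℕ)

lemma mat_ff (hpq : p ≠ q) (hr2 : r < 2*j) (hs2 : s < 2*j) (hr : r/2 = p) (hs : s/2 = q) :
    typeJ00Mat j a b c ⟨r, by omega⟩ ⟨s, by omega⟩
      = (b (p+1) * c (q+1) - b (q+1) * c (p+1)) / a (j+1) := by
  simp only [typeJ00Mat, Matrix.of_apply]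
  rw [if_neg (by omega), if_pos (by omega : r < 2*j ∧ s < 2*j), if_neg (by omega), hr, hs]

lemma mat_diag (hr2 : r < 2*(j+1)) : typeJ00Mat j a b c ⟨r, by omega⟩ ⟨r, by omega⟩ = 0 := by
  simp only [typeJ00Mat, Matrix.of_apply]
  simp

lemma mat_d1 (hp : p < j) :
    typeJ00Mat j a b c ⟨2*p, by omega⟩ ⟨2*p+1, by omega⟩ = a (p+1) := by
  simp only [typeJ00Mat, Matrix.of_apply]
  rw [if_neg (by omega), if_pos (by omega : 2*p < 2*j ∧ 2*p+1 < 2*j), if_pos (by omega),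
    if_pos (by omega), show 2*p/2 = p from by omega]

lemma mat_d2 (hp : p < j) :
    typeJ00Mat j a b c ⟨2*p+1, by omega⟩ ⟨2*p, by omega⟩ = -a (p+1) := by
  simp only [typeJ00Mat, Matrix.of_apply]
  rw [if_neg (by omega), if_pos (by omega : 2*p+1 < 2*j ∧ 2*p < 2*j), if_pos (by omega),
    if_neg (by omega), show (2*p+1)/2 = p from by omega]

lemma mat_fu (hr2 : r < 2*j) (hr : r/2 = p) :
    typeJ00Mat j a b c ⟨r, by omega⟩ ⟨2*j, by omega⟩ = b (p+1) := by
  simp only [typeJ00Mat, Matrix.of_apply]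
  rw [if_neg (by omega), if_neg (by omega), if_pos (by omega), if_pos trivial, hr]

lemma mat_fv (hr2 : r < 2*j) (hr : r/2 = p) :
    typeJ00Mat j a b c ⟨r, by omega⟩ ⟨2*j+1, by omega⟩ = c (p+1) := by
  simp only [typeJ00Mat, Matrix.of_apply]
  rw [if_neg (by omega), if_neg (by omega), if_pos (by omega), if_neg (by omega), hr]

lemma mat_uf (hs2 : s < 2*j) (hs : s/2 = q) :
    typeJ00Mat j a b c ⟨2*j, by omega⟩ ⟨s, by omega⟩ = -b (q+1) := by
  simp only [typeJ00Mat, Matrix.of_apply]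
  rw [if_neg (by omega), if_neg (by omega), if_neg (by omega), if_pos (by omega), if_pos trivial, hs]

lemma mat_vf (hs2 : s < 2*j) (hs : s/2 = q) :
    typeJ00Mat j a b c ⟨2*j+1, by omega⟩ ⟨s, by omega⟩ = -c (q+1) := by
  simp only [typeJ00Mat, Matrix.of_apply]
  rw [if_neg (by omega), if_neg (by omega), if_neg (by omega), if_pos (by omega), if_neg (by omega), hs]

lemma mat_uv : typeJ00Mat j a b c ⟨2*j, by omega⟩ ⟨2*j+1, by omega⟩ = a (j+1) := by
  simp only [typeJ00Mat, Matrix.of_apply]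
  rw [if_neg (by omega), if_neg (by omega), if_neg (by omega), if_neg (by omega), if_pos (by omega)]

lemma mat_vu : typeJ00Mat j a b c ⟨2*j+1, by omega⟩ ⟨2*j, by omega⟩ = -a (j+1) := by
  simp only [typeJ00Mat, Matrix.of_apply]
  rw [if_neg (by omega), if_neg (by omega), if_neg (by omega), if_neg (by omega), if_neg (by omega)]

lemma sum4 {n : ℕ} (f : Fin n → ℝ) (m1 m2 m3 m4 : Fin n)
    (h12 : m1 ≠ m2) (h13 : m1 ≠ m3) (h14 : m1 ≠ m4) (h23 : m2 ≠ m3) (h24 : m2 ≠ m4)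
    (h34 : m3 ≠ m4)
    (h0 : ∀ m, m ≠ m1 → m ≠ m2 → m ≠ m3 → m ≠ m4 → f m = 0) :
    ∑ m, f m = f m1 + f m2 + f m3 + f m4 := by
  have h : ∑ m, f m = ∑ m ∈ ({m1, m2, m3, m4} : Finset (Fin n)), f m := by
    refine (Finset.sum_subset (Finset.subset_univ _) ?_).symm
    intro m _ hm
    simp only [Finset.mem_insert, Finset.mem_singleton, not_or] at hm
    exact h0 m hm.1 hm.2.1 hm.2.2.1 hm.2.2.2
  rw [h, Finset.sum_insert (by simp [h12, h13, h14]), Finset.sum_insert (by simp [h23, h24]),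
    Finset.sum_insert (by simp [h34]), Finset.sum_singleton]
  ring

end Aux

set_option maxHeartbeats 4000000 in
/-- the integrals F_i of the even type [j,0,0] LV system pairwise
Poisson commute with respect to the bracket {x_i,x_k} = A_{ik} x_i x_k. -/
theorem stmt13 (j : ℕ) (a b c : ℕ → ℝ) (ha : a (j + 1) ≠ 0) (i k : Fin j) :
    ∀ x : Fin (2 * (j + 1)) → ℝ, (∀ m, 0 < x m) →
      pbracket (typeJ00Mat j a b c) (typeJ00F j a b c i) (typeJ00F j a b c k) x = 0 := by
  intro x hx
  have hij := i.isLt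
  have hkj := k.isLt
  simp only [pbracket]
  rw [sum4 (fun m => ∑ l, typeJ00Mat j a b c m l * x m * x l * grad (typeJ00F j a b c i) x m *
        grad (typeJ00F j a b c k) x l)
      ⟨2*i.val, by omega⟩ ⟨2*i.val+1, by omega⟩ ⟨2*j, by omega⟩ ⟨2*j+1, by omega⟩
      (by simp only [ne_eq, Fin.mk.injEq]; omega) (by simp only [ne_eq, Fin.mk.injEq]; omega)
      (by simp only [ne_eq, Fin.mk.injEq]; omega) (by simp only [ne_eq, Fin.mk.injEq]; omega)
      (by simp only [ne_eq, Fin.mk.injEq]; omega) (by simp only [ne_eq, Fin.mk.injEq]; omega)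
      (fun m h1 h2 h3 h4 => Finset.sum_eq_zero fun l _ => by
        rw [grad_zero j a b c i x hx m h1 h2 h3 h4]; ring)]
  have hinner : ∀ m : Fin (2*(j+1)),
      (∑ l, typeJ00Mat j a b c m l * x m * x l * grad (typeJ00F j a b c i) x m *
        grad (typeJ00F j a b c k) x l)
      = typeJ00Mat j a b c m ⟨2*k.val, by omega⟩ * x m * x ⟨2*k.val, by omega⟩ *
          grad (typeJ00F j a b c i) x m * grad (typeJ00F j a b c k) x ⟨2*k.val, by omega⟩
        + typeJ00Mat j a b c m ⟨2*k.val+1, by omega⟩ * x m * x ⟨2*k.val+1, by omega⟩ *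
          grad (typeJ00F j a b c i) x m * grad (typeJ00F j a b c k) x ⟨2*k.val+1, by omega⟩
        + typeJ00Mat j a b c m ⟨2*j, by omega⟩ * x m * x ⟨2*j, by omega⟩ *
          grad (typeJ00F j a b c i) x m * grad (typeJ00F j a b c k) x ⟨2*j, by omega⟩
        + typeJ00Mat j a b c m ⟨2*j+1, by omega⟩ * x m * x ⟨2*j+1, by omega⟩ *
          grad (typeJ00F j a b c i) x m * grad (typeJ00F j a b c k) x ⟨2*j+1, by omega⟩ := by
    intro m
    exact sum4 _ ⟨2*k.val, by omega⟩ ⟨2*k.val+1, by omega⟩ ⟨2*j, by omega⟩ ⟨2*j+1, by omega⟩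
      (by simp only [ne_eq, Fin.mk.injEq]; omega) (by simp only [ne_eq, Fin.mk.injEq]; omega)
      (by simp only [ne_eq, Fin.mk.injEq]; omega) (by simp only [ne_eq, Fin.mk.injEq]; omega)
      (by simp only [ne_eq, Fin.mk.injEq]; omega) (by simp only [ne_eq, Fin.mk.injEq]; omega)
      (fun l h1 h2 h3 h4 => by rw [grad_zero j a b c k x hx l h1 h2 h3 h4, mul_zero])
  simp only [hinner]
  rw [grad_front j a b c i x hx ⟨2*i.val, by omega⟩ (Or.inl rfl),
    grad_front j a b c i x hx ⟨2*i.val+1, by omega⟩ (Or.inr rfl),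
    grad_front j a b c k x hx ⟨2*k.val, by omega⟩ (Or.inl rfl),
    grad_front j a b c k x hx ⟨2*k.val+1, by omega⟩ (Or.inr rfl),
    grad_u j a b c i x hx, grad_u j a b c k x hx, grad_v j a b c i x hx, grad_v j a b c k x hx]
  have hsP : (0:ℝ) < x ⟨2*i.val, by omega⟩ + x ⟨2*i.val+1, by omega⟩ := add_pos (hx _) (hx _)
  have hsQ : (0:ℝ) < x ⟨2*k.val, by omega⟩ + x ⟨2*k.val+1, by omega⟩ := add_pos (hx _) (hx _)
  have hu : (0:ℝ) < x ⟨2*j, by omega⟩ := hx _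
  have hv : (0:ℝ) < x ⟨2*j+1, by omega⟩ := hx _
  have eP : (x ⟨2*i.val, by omega⟩ + x ⟨2*i.val+1, by omega⟩ : ℝ) ^ (a (j+1) - 1)
      = (x ⟨2*i.val, by omega⟩ + x ⟨2*i.val+1, by omega⟩) ^ a (j+1)
        / (x ⟨2*i.val, by omega⟩ + x ⟨2*i.val+1, by omega⟩) := by
    rw [Real.rpow_sub hsP, Real.rpow_one]
  have eQ : (x ⟨2*k.val, by omega⟩ + x ⟨2*k.val+1, by omega⟩ : ℝ) ^ (a (j+1) - 1)
      = (x ⟨2*k.val, by omega⟩ + x ⟨2*k.val+1, by omega⟩) ^ a (j+1)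
        / (x ⟨2*k.val, by omega⟩ + x ⟨2*k.val+1, by omega⟩) := by
    rw [Real.rpow_sub hsQ, Real.rpow_one]
  have eUi : (x ⟨2*j, by omega⟩ : ℝ) ^ (-(c (i.val+1)) - 1)
      = (x ⟨2*j, by omega⟩) ^ (-(c (i.val+1))) / x ⟨2*j, by omega⟩ := by
    rw [Real.rpow_sub hu, Real.rpow_one]
  have eUk : (x ⟨2*j, by omega⟩ : ℝ) ^ (-(c (k.val+1)) - 1)
      = (x ⟨2*j, by omega⟩) ^ (-(c (k.val+1))) / x ⟨2*j, by omega⟩ := by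
    rw [Real.rpow_sub hu, Real.rpow_one]
  have eVi : (x ⟨2*j+1, by omega⟩ : ℝ) ^ (b (i.val+1) - 1)
      = (x ⟨2*j+1, by omega⟩) ^ (b (i.val+1)) / x ⟨2*j+1, by omega⟩ := by
    rw [Real.rpow_sub hv, Real.rpow_one]
  have eVk : (x ⟨2*j+1, by omega⟩ : ℝ) ^ (b (k.val+1) - 1)
      = (x ⟨2*j+1, by omega⟩) ^ (b (k.val+1)) / x ⟨2*j+1, by omega⟩ := by
    rw [Real.rpow_sub hv, Real.rpow_one]
  by_cases hik : i = k
  · subst hik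
    rw [mat_diag j a b c (2*i.val) (by omega), mat_d1 j a b c i.val hij,
      mat_d2 j a b c i.val hij, mat_diag j a b c (2*i.val+1) (by omega),
      mat_fu j a b c i.val (2*i.val) (by omega) (by omega),
      mat_fu j a b c i.val (2*i.val+1) (by omega) (by omega),
      mat_fv j a b c i.val (2*i.val) (by omega) (by omega),
      mat_fv j a b c i.val (2*i.val+1) (by omega) (by omega),
      mat_uf j a b c i.val (2*i.val) (by omega) (by omega),
      mat_uf j a b c i.val (2*i.val+1) (by omega) (by omega),
      mat_vf j a b c i.val (2*i.val) (by omega) (by omega),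
      mat_vf j a b c i.val (2*i.val+1) (by omega) (by omega),
      mat_diag j a b c (2*j) (by omega), mat_diag j a b c (2*j+1) (by omega),
      mat_uv j a b c, mat_vu j a b c]
    rw [eP, eUi, eVi]
    field_simp
    ring
  · have hpq : i.val ≠ k.val := fun h => hik (Fin.ext h)
    rw [mat_ff j a b c i.val k.val (2*i.val) (2*k.val) hpq (by omega) (by omega) (by omega) (by omega),
      mat_ff j a b c i.val k.val (2*i.val) (2*k.val+1) hpq (by omega) (by omega) (by omega) (by omega),
      mat_ff j a b c i.val k.val (2*i.val+1) (2*k.val) hpq (by omega) (by omega) (by omega) (by omega),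
      mat_ff j a b c i.val k.val (2*i.val+1) (2*k.val+1) hpq (by omega) (by omega) (by omega) (by omega),
      mat_fu j a b c i.val (2*i.val) (by omega) (by omega),
      mat_fu j a b c i.val (2*i.val+1) (by omega) (by omega),
      mat_fv j a b c i.val (2*i.val) (by omega) (by omega),
      mat_fv j a b c i.val (2*i.val+1) (by omega) (by omega),
      mat_uf j a b c k.val (2*k.val) (by omega) (by omega),
      mat_uf j a b c k.val (2*k.val+1) (by omega) (by omega),
      mat_vf j a b c k.val (2*k.val) (by omega) (by omega),
      mat_vf j a b c k.val (2*k.val+1) (by omega) (by omega),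
      mat_diag j a b c (2*j) (by omega), mat_diag j a b c (2*j+1) (by omega),
      mat_uv j a b c, mat_vu j a b c]
    rw [eP, eQ, eUi, eUk, eVi, eVk]
    field_simp
    ring
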